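/- Let (v_0,…,v_{n−1}) be a simple closed polygon in ℝ² with no three consecutive vertices collinear. Then there exists δ > 0 such that every sequence of points (w_0,…,w_{n−1}) with ‖w_i − v_i‖ < δ for all i forms a simple closed polygon with no three consecutive vertices collinear. -/

import Mathlib

open scoped EuclideanGeometry RealInnerProductSpace

noncomputable section

abbrev E2 : Type := EuclideanSpace ℝ (Fin 2)
abbrev E3 : Type := EuclideanSpace ℝ (Fin 3)

/-- Simplicity of a closed polygonal chain with vertices `v 0, …, v (n-1)`
and edges `[v i, v ((i+1) % n)]`. -/
def IsSimpleClosedChain {E : Type*} [NormedAddCommGroup E] [NormedSpace ℝ E]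
    (n : ℕ) (v : ℕ → E) : Prop :=
  (∀ i < n, ∀ j < n, i ≠ j → (i + 1) % n ≠ j → (j + 1) % n ≠ i →
    Disjoint (segment ℝ (v i) (v ((i+1) % n))) (segment ℝ (v j) (v ((j+1) % n)))) ∧
  ∀ i < n, segment ℝ (v i) (v ((i+1) % n)) ∩
      segment ℝ (v ((i+1) % n)) (v ((i+2) % n)) = {v ((i+1) % n)}

/-- A motion of a closed chain: continuous on `[0,1]`, starting at `v`,
preserving all edge lengths and simplicity. -/
def IsClosedChainMotion {E : Type*} [NormedAddCommGroup E] [NormedSpace ℝ E]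
    (n : ℕ) (v : ℕ → E) (f : ℝ → ℕ → E) : Prop :=
  (∀ i < n, ContinuousOn (fun t => f t i) (Set.Icc (0:ℝ) 1)) ∧
  (∀ i < n, f 0 i = v i) ∧
  (∀ t ∈ Set.Icc (0:ℝ) 1, ∀ i < n,
    dist (f t ((i+1) % n)) (f t i) = dist (v ((i+1) % n)) (v i)) ∧
  (∀ t ∈ Set.Icc (0:ℝ) 1, IsSimpleClosedChain n (f t))

namespace PolyPerturb

/-- cross product test for collinearity -/
def cross (a b c : E2) : ℝ :=
  (b 0 - a 0) * (c 1 - a 1) - (b 1 - a 1) * (c 0 - a 0)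

lemma collinear_iff_cross (a b c : E2) :
    Collinear ℝ ({a, b, c} : Set E2) ↔ cross a b c = 0 := by
  constructor
  · intro h
    obtain ⟨p₀, u, h⟩ :=
      (collinear_iff_exists_forall_eq_smul_vadd (s := ({a,b,c} : Set E2))).mp h
    obtain ⟨ra, ha⟩ := h a (by simp)
    obtain ⟨rb, hb⟩ := h b (by simp)
    obtain ⟨rc, hc⟩ := h c (by simp)
    simp only [vadd_eq_add] at ha hb hc
    rw [cross, ha, hb, hc]
    simp only [PiLp.add_apply, PiLp.smul_apply, smul_eq_mul]
    ring
  · intro h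
    by_cases hba : b = a
    · subst hba
      have : ({b, b, c} : Set E2) = {b, c} := by
        simp [Set.insert_comm, Set.pair_comm]
      rw [this]
      exact collinear_pair ℝ b c
    · have hu : b - a ≠ 0 := sub_ne_zero.mpr hba
      have hcase : (b 0 - a 0) ≠ 0 ∨ (b 1 - a 1) ≠ 0 := by
        by_contra hc2
        push_neg at hc2
        apply hu
        ext i
        fin_cases i
        · simpa [sub_eq_zero] using sub_eq_zero.mp hc2.1
        · simpa [sub_eq_zero] using sub_eq_zero.mp hc2.2
      unfold cross at h
      obtain ⟨s, hs⟩ : ∃ s : ℝ, c - a = s • (b - a) := by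
        rcases hcase with h0 | h1
        · refine ⟨(c 0 - a 0) / (b 0 - a 0), ?_⟩
          ext i
          fin_cases i
          · show c 0 - a 0 = (c 0 - a 0) / (b 0 - a 0) * (b 0 - a 0)
            field_simp
          · show c 1 - a 1 = (c 0 - a 0) / (b 0 - a 0) * (b 1 - a 1)
            field_simp
            nlinarith [h]
        · refine ⟨(c 1 - a 1) / (b 1 - a 1), ?_⟩
          ext i
          fin_cases i
          · show c 0 - a 0 = (c 1 - a 1) / (b 1 - a 1) * (b 0 - a 0)
            field_simp
            nlinarith [h]
          · show c 1 - a 1 = (c 1 - a 1) / (b 1 - a 1) * (b 1 - a 1)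
            field_simp
      apply (collinear_iff_exists_forall_eq_smul_vadd (s := ({a,b,c} : Set E2))).mpr
      refine ⟨a, b - a, ?_⟩
      intro p hp
      simp only [Set.mem_insert_iff, Set.mem_singleton_iff] at hp
      rcases hp with rfl | rfl | rfl
      · exact ⟨0, by simp⟩
      · exact ⟨1, by simp⟩
      · exact ⟨s, by rw [vadd_eq_add, ← hs]; abel⟩

lemma noncol_stable {a b c : E2} (h : ¬ Collinear ℝ ({a, b, c} : Set E2)) :
    ∃ ε > (0:ℝ), ∀ a' b' c' : E2, dist a' a < ε → dist b' b < ε → dist c' c < ε →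
      ¬ Collinear ℝ ({a', b', c'} : Set E2) := by
  have hf : Continuous (fun p : E2 × E2 × E2 => cross p.1 p.2.1 p.2.2) := by
    unfold cross; fun_prop
  have hopen : IsOpen {p : E2 × E2 × E2 | cross p.1 p.2.1 p.2.2 ≠ 0} := by
    have := (isClosed_singleton (x := (0:ℝ))).preimage hf
    simpa [Set.preimage, Set.compl_setOf] using this.isOpen_compl
  have hmem : (a, b, c) ∈ {p : E2 × E2 × E2 | cross p.1 p.2.1 p.2.2 ≠ 0} := by
    simpa using (not_iff_not.mpr (collinear_iff_cross a b c)).mp h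
  obtain ⟨ε, hε, hball⟩ := Metric.isOpen_iff.mp hopen _ hmem
  refine ⟨ε, hε, fun a' b' c' ha hb hc => ?_⟩
  have : (a', b', c') ∈ Metric.ball ((a, b, c) : E2 × E2 × E2) ε := by
    simp only [Metric.mem_ball, Prod.dist_eq]
    exact max_lt ha (max_lt hb hc)
  have := hball this
  rw [collinear_iff_cross]
  exact this

lemma seg_compact (x y : E2) : IsCompact (segment ℝ x y) := by
  rw [segment_eq_image]
  exact isCompact_Icc.image (by continuity)

lemma seg_subset_thickening {δ : ℝ} (_hδ : 0 < δ) {a b a' b' : E2}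
    (ha : dist a' a < δ) (hb : dist b' b < δ) :
    segment ℝ a' b' ⊆ Metric.thickening δ (segment ℝ a b) := by
  intro x hx
  obtain ⟨u, t, hu, ht, hut, hx⟩ := hx
  rw [Metric.mem_thickening_iff]
  refine ⟨u • a + t • b, ⟨u, t, hu, ht, hut, rfl⟩, ?_⟩
  have : x - (u • a + t • b) = u • (a' - a) + t • (b' - b) := by
    rw [← hx]; module
  rw [dist_eq_norm, this]
  calc ‖u • (a' - a) + t • (b' - b)‖ ≤ ‖u • (a' - a)‖ + ‖t • (b' - b)‖ := norm_add_le _ _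
    _ = u * ‖a' - a‖ + t * ‖b' - b‖ := by
        rw [norm_smul, norm_smul, Real.norm_eq_abs, Real.norm_eq_abs,
          abs_of_nonneg hu, abs_of_nonneg ht]
    _ < δ := by
        rw [dist_eq_norm] at ha hb
        have h3 : u * δ + t * δ = δ := by rw [← add_mul, hut, one_mul]
        rcases eq_or_lt_of_le hu with hu0 | hu0
        · have ht1 : t = 1 := by linarith
          have h2 : t * ‖b' - b‖ < t * δ := by rw [ht1, one_mul, one_mul]; exact hb
          nlinarith [norm_nonneg (a' - a)]
        · have h1 : u * ‖a' - a‖ < u * δ := mul_lt_mul_of_pos_left ha hu0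
          have h2 : t * ‖b' - b‖ ≤ t * δ := mul_le_mul_of_nonneg_left hb.le ht
          linarith

lemma adjacent_segments {a b c : E2} (h : ¬ Collinear ℝ ({a, b, c} : Set E2)) :
    segment ℝ a b ∩ segment ℝ b c = {b} := by
  have hAI : AffineIndependent ℝ ![a, b, c] :=
    affineIndependent_iff_not_collinear_set.mpr h
  rw [affineIndependent_iff] at hAI
  ext x
  simp only [Set.mem_inter_iff, Set.mem_singleton_iff]
  constructor
  · rintro ⟨⟨u, t, hu, ht, hut, hx1⟩, ⟨s2, r, hs2, hr, hsr, hx2⟩⟩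
    have hW := hAI Finset.univ ![u, t - s2, -r]
      (by simp [Fin.sum_univ_three]; linarith)
      (by
        simp only [Fin.sum_univ_three, Matrix.cons_val_zero, Matrix.cons_val_one,
          Matrix.head_cons, Matrix.cons_val_two, Matrix.tail_cons]
        linear_combination (norm := module) hx1 - hx2)
    have hu0 : u = 0 := by simpa using hW 0 (Finset.mem_univ _)
    have hr0 : r = 0 := by
      have h2 := hW 2 (Finset.mem_univ _)
      simp only [Matrix.cons_val_two, Matrix.tail_cons, Matrix.head_cons, neg_eq_zero] at h2
      exact h2
    have hs1 : s2 = 1 := by linarith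
    rw [hs1, hr0, one_smul, zero_smul, add_zero] at hx2
    exact hx2.symm
  · rintro rfl
    exact ⟨right_mem_segment ℝ _ _, left_mem_segment ℝ _ _⟩

end PolyPerturb

/-- For a simple closed polygon in the plane with no three
consecutive vertices collinear there is a `δ > 0` such that every `δ`-perturbation
of the vertices is again a simple closed polygon with no three consecutive
vertices collinear. -/


theorem simple_polygon_perturbation (n : ℕ) (hn : 3 ≤ n) (v : ℕ → E2)
    (hsimple : IsSimpleClosedChain n v)
    (hcol : ∀ i < n, ¬ Collinear ℝ ({v ((i + n - 1) % n), v i, v ((i + 1) % n)} : Set E2)) :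
    ∃ δ > (0:ℝ), ∀ w : ℕ → E2, (∀ i < n, dist (w i) (v i) < δ) →
      IsSimpleClosedChain n w ∧
      ∀ i < n, ¬ Collinear ℝ ({w ((i + n - 1) % n), w i, w ((i + 1) % n)} : Set E2) := by
  classical
  have hnpos : 0 < n := by omega
  have idxA : ∀ i < n, ((i + 1) % n + n - 1) % n = i := by
    intro i hi
    rw [show (i + 1) % n + n - 1 = (i + 1) % n + (n - 1) by omega, Nat.mod_add_mod,
      show i + 1 + (n - 1) = i + n by omega, Nat.add_mod_right, Nat.mod_eq_of_lt hi]
  have idxB : ∀ i : ℕ, ((i + 1) % n + 1) % n = (i + 2) % n := by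
    intro i; rw [Nat.mod_add_mod]
  have key1 : ∀ i : ℕ, ∃ ε > (0:ℝ), i < n → ∀ a b c : E2,
      dist a (v ((i + n - 1) % n)) < ε → dist b (v i) < ε → dist c (v ((i + 1) % n)) < ε →
      ¬ Collinear ℝ ({a, b, c} : Set E2) := by
    intro i
    by_cases hi : i < n
    · obtain ⟨ε, hε, hεp⟩ := PolyPerturb.noncol_stable (hcol i hi)
      exact ⟨ε, hε, fun _ => hεp⟩
    · exact ⟨1, one_pos, fun h => absurd h hi⟩
  choose ε1 hε1 hP1 using key1
  have key2 : ∀ q : ℕ × ℕ, ∃ ε > (0:ℝ), q.1 < n → q.2 < n → q.1 ≠ q.2 →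
      (q.1 + 1) % n ≠ q.2 → (q.2 + 1) % n ≠ q.1 →
      ∀ a b c d : E2, dist a (v q.1) < ε → dist b (v ((q.1 + 1) % n)) < ε →
        dist c (v q.2) < ε → dist d (v ((q.2 + 1) % n)) < ε →
        Disjoint (segment ℝ a b) (segment ℝ c d) := by
    rintro ⟨i, j⟩
    by_cases hcond : i < n ∧ j < n ∧ i ≠ j ∧ (i + 1) % n ≠ j ∧ (j + 1) % n ≠ i
    · obtain ⟨hi, hj, h1, h2, h3⟩ := hcond
      have hdisj := hsimple.1 i hi j hj h1 h2 h3
      obtain ⟨ε, hε, hth⟩ := hdisj.exists_thickenings (PolyPerturb.seg_compact _ _)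
        (PolyPerturb.seg_compact _ _).isClosed
      refine ⟨ε, hε, fun _ _ _ _ _ a b c d ha hb hc hd => ?_⟩
      exact hth.mono (PolyPerturb.seg_subset_thickening hε ha hb)
        (PolyPerturb.seg_subset_thickening hε hc hd)
    · exact ⟨1, one_pos, fun h1 h2 h3 h4 h5 => absurd ⟨h1, h2, h3, h4, h5⟩ hcond⟩
  choose ε2 hε2 hP2 using key2
  have hs1ne : (Finset.range n).Nonempty := ⟨0, Finset.mem_range.mpr hnpos⟩
  have hs2ne : (Finset.range n ×ˢ Finset.range n).Nonempty := hs1ne.product hs1ne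
  set δ : ℝ := min ((Finset.range n).inf' hs1ne ε1)
      ((Finset.range n ×ˢ Finset.range n).inf' hs2ne ε2) with hδdef
  have hδpos : 0 < δ := by
    refine lt_min ?_ ?_
    · rw [Finset.lt_inf'_iff]; exact fun i _ => hε1 i
    · rw [Finset.lt_inf'_iff]; exact fun q _ => hε2 q
  refine ⟨δ, hδpos, fun w hw => ?_⟩
  have hδ1 : ∀ i < n, δ ≤ ε1 i := fun i hi =>
    (min_le_left _ _).trans (Finset.inf'_le _ (Finset.mem_range.mpr hi))
  have hδ2 : ∀ i < n, ∀ j < n, δ ≤ ε2 (i, j) := fun i hi j hj =>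
    (min_le_right _ _).trans (Finset.inf'_le _ (Finset.mem_product.mpr
      ⟨Finset.mem_range.mpr hi, Finset.mem_range.mpr hj⟩))
  have hwnoncol : ∀ i < n,
      ¬ Collinear ℝ ({w ((i + n - 1) % n), w i, w ((i + 1) % n)} : Set E2) := by
    intro i hi
    exact hP1 i hi _ _ _
      (lt_of_lt_of_le (hw _ (Nat.mod_lt _ hnpos)) (hδ1 i hi))
      (lt_of_lt_of_le (hw i hi) (hδ1 i hi))
      (lt_of_lt_of_le (hw _ (Nat.mod_lt _ hnpos)) (hδ1 i hi))
  refine ⟨⟨?_, ?_⟩, hwnoncol⟩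
  · intro i hi j hj h1 h2 h3
    exact hP2 (i, j) hi hj h1 h2 h3 _ _ _ _
      (lt_of_lt_of_le (hw i hi) (hδ2 i hi j hj))
      (lt_of_lt_of_le (hw _ (Nat.mod_lt _ hnpos)) (hδ2 i hi j hj))
      (lt_of_lt_of_le (hw j hj) (hδ2 i hi j hj))
      (lt_of_lt_of_le (hw _ (Nat.mod_lt _ hnpos)) (hδ2 i hi j hj))
  · intro i hi
    have hi' : (i + 1) % n < n := Nat.mod_lt _ hnpos
    have h := hwnoncol ((i + 1) % n) hi'
    rw [idxA i hi, idxB i] at h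
    exact PolyPerturb.adjacent_segments h
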